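/- Let τ > 0 and L ∈ ℕ with L ≥ 1. Let g ∈ L²(0,τ) satisfy ∫_0^τ t^i g(t) dt = 0 for all i = 0, 1, …, L−1. Define ψ : [0,τ] → ℝ by ψ(t) := (1/(L−1)!) ∫_0^t (t−s)^{L−1} g(s) ds. Then ψ ∈ H^L_0[0,τ] with ψ^{(L)} = g almost everywhere; that is: ψ, ψ', …, ψ^{(L−1)} are absolutely continuous on [0,τ], ψ^{(ℓ)}(0) = 0 and ψ^{(ℓ)}(τ) = 0 for all ℓ = 0, …, L−1, and the a.e. derivative of ψ^{(L−1)} equals g almost everywhere on [0,τ]. -/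

import Mathlib

open MeasureTheory Matrix

/-- `D` is a chain of a.e. derivatives on `[0,τ]` up to order `L`: for each `ℓ < L`,
`D (ℓ+1)` is integrable on `[0,τ]` and `D ℓ` is its antiderivative there, i.e. `D ℓ` is
absolutely continuous on `[0,τ]` with a.e. derivative `D (ℓ+1)`. -/
def DerivChain (τ : ℝ) (L : ℕ) {E : Type} [NormedAddCommGroup E] [NormedSpace ℝ E]
    (D : ℕ → ℝ → E) : Prop :=
  ∀ ℓ < L, IntervalIntegrable (D (ℓ + 1)) MeasureTheory.volume 0 τ ∧
    ∀ t ∈ Set.Icc (0 : ℝ) τ, D ℓ t = D ℓ 0 + ∫ s in (0 : ℝ)..t, D (ℓ + 1) s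

/-- `f ∈ L²([0,τ]; E)`. -/
def MemL2 (τ : ℝ) {E : Type} [NormedAddCommGroup E] (f : ℝ → E) : Prop :=
  MeasureTheory.MemLp f 2 (MeasureTheory.volume.restrict (Set.Ioc (0 : ℝ) τ))

/-- `D` represents an element of `H^L_0[0,τ]` together with its derivatives: the chain
condition, `D L ∈ L²(0,τ)`, and `D ℓ` vanishes at `0` and at `τ` for all `ℓ < L`.
The element of `H^L_0[0,τ]` itself is `D 0`. -/
def IsH0 (τ : ℝ) (L : ℕ) (D : ℕ → ℝ → ℝ) : Prop :=
  DerivChain τ L D ∧ MemL2 τ (D L) ∧ ∀ ℓ < L, D ℓ 0 = 0 ∧ D ℓ τ = 0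

/-- `D` represents an element of the Sobolev space `H^M([0,τ]; E)` together with its
derivatives: the chain condition and `D M ∈ L²`. The element itself is `D 0`. -/
def IsHSob (τ : ℝ) (M : ℕ) {E : Type} [NormedAddCommGroup E] [NormedSpace ℝ E]
    (D : ℕ → ℝ → E) : Prop :=
  DerivChain τ M D ∧ MemL2 τ (D M)

noncomputable def iterInt (g : ℝ → ℝ) : ℕ → ℝ → ℝ
  | 0 => g
  | (k+1) => fun t => ∫ s in (0:ℝ)..t, iterInt g k s

lemma aux_wint {g : ℝ → ℝ} {τ : ℝ} (hg : IntegrableOn g (Set.Ioc 0 τ))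
    {a b : ℝ} (hab : Set.Ioc a b ⊆ Set.Ioc 0 τ) (w : ℝ → ℝ) (hw : Continuous w)
    (C : ℝ) (hC : ∀ s ∈ Set.Ioc a b, |w s| ≤ C) :
    IntegrableOn (fun s => w s * g s) (Set.Ioc a b) := by
  have hg' := hg.mono_set hab
  refine Integrable.mono (hg'.norm.const_mul C)
    (hw.aestronglyMeasurable.mul hg'.aestronglyMeasurable) ?_
  rw [ae_restrict_iff' measurableSet_Ioc]
  filter_upwards with s hs
  have h1 := hC s hs
  have h2 : (0:ℝ) ≤ |g s| := abs_nonneg _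
  refine le_trans ?_ (le_abs_self _)
  simp only [Real.norm_eq_abs, abs_mul, abs_abs]
  exact mul_le_mul_of_nonneg_right h1 h2

lemma aux_cont {g : ℝ → ℝ} {τ : ℝ} (hτ : 0 < τ) (hg : IntegrableOn g (Set.Ioc 0 τ)) :
    ∀ k, ContinuousOn (iterInt g (k+1)) (Set.Icc 0 τ) ∧
      IntegrableOn (iterInt g (k+1)) (Set.Ioc 0 τ) := by
  have hIcc : Set.uIcc (0:ℝ) τ = Set.Icc 0 τ := Set.uIcc_of_le hτ.le
  intro k
  induction k with
  | zero =>
    have hgIcc : IntegrableOn g (Set.Icc 0 τ) := by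
      rwa [integrableOn_Icc_iff_integrableOn_Ioc]
    have hcont : ContinuousOn (iterInt g 1) (Set.Icc 0 τ) := by
      have := intervalIntegral.continuousOn_primitive_interval (a := 0) (b := τ)
        (μ := volume) (f := g) (by rwa [hIcc])
      rw [hIcc] at this
      exact this
    exact ⟨hcont, (hcont.integrableOn_Icc).mono_set Set.Ioc_subset_Icc_self⟩
  | succ k ih =>
    have hIcc' : IntegrableOn (iterInt g (k+1)) (Set.uIcc 0 τ) := by
      rw [hIcc, integrableOn_Icc_iff_integrableOn_Ioc]; exact ih.2
    have hcont : ContinuousOn (iterInt g (k+2)) (Set.Icc 0 τ) := by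
      have := intervalIntegral.continuousOn_primitive_interval (a := 0) (b := τ)
        (μ := volume) (f := iterInt g (k+1)) hIcc'
      rw [hIcc] at this
      exact this
    exact ⟨hcont, (hcont.integrableOn_Icc).mono_set Set.Ioc_subset_Icc_self⟩

lemma aux_fubini {g : ℝ → ℝ} {τ : ℝ} (hg : IntegrableOn g (Set.Ioc 0 τ))
    (k : ℕ) {t : ℝ} (ht0 : 0 ≤ t) (htτ : t ≤ τ) :
    ∫ u in (0:ℝ)..t, (∫ s in (0:ℝ)..u, (u - s)^k * g s) =
      (1/(k+1) : ℝ) * ∫ s in (0:ℝ)..t, (t - s)^(k+1) * g s := by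
  set μt : Measure ℝ := volume.restrict (Set.Ioc 0 t) with hμt
  haveI : IsFiniteMeasure μt := by
    constructor
    rw [hμt, Measure.restrict_apply_univ]
    exact measure_Ioc_lt_top
  have hsub : Set.Ioc (0:ℝ) t ⊆ Set.Ioc 0 τ := Set.Ioc_subset_Ioc_right htτ
  have hgt : IntegrableOn g (Set.Ioc 0 t) := hg.mono_set hsub
  set h : ℝ → ℝ → ℝ := fun u s => if s < u then (u - s)^k * g s else 0 with hh
  -- measurability
  have hh_aesm : AEStronglyMeasurable (Function.uncurry h) (μt.prod μt) := by
    have h1 : AEStronglyMeasurable (fun p : ℝ×ℝ => (p.1 - p.2)^k * g p.2) (μt.prod μt) :=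
      (((continuous_fst.sub continuous_snd).pow k).aestronglyMeasurable).mul
        hgt.aestronglyMeasurable.comp_snd
    have h3 := h1.indicator (measurableSet_lt measurable_snd measurable_fst)
    have : Function.uncurry h =
        Set.indicator {p : ℝ×ℝ | p.2 < p.1} (fun p => (p.1 - p.2)^k * g p.2) := by
      funext p
      by_cases hp : p.2 < p.1 <;>
        simp [Function.uncurry, hh, Set.indicator, hp]
    rw [this]
    exact h3
  -- integrability on the product
  have hint : Integrable (Function.uncurry h) (μt.prod μt) := by
    refine Integrable.mono ((integrable_const (t^k)).mul_prod hgt.norm) hh_aesm ?_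
    rw [hμt, Measure.prod_restrict, ae_restrict_iff' (measurableSet_Ioc.prod measurableSet_Ioc)]
    filter_upwards with p hp
    obtain ⟨hp1, hp2⟩ := hp
    refine le_trans ?_ (le_abs_self _)
    rcases lt_or_ge p.2 p.1 with hlt | hle
    · have e : Function.uncurry h p = (p.1 - p.2)^k * g p.2 := by
        simp [Function.uncurry, hh, hlt]
      rw [e, Real.norm_eq_abs, abs_mul, abs_pow, Real.norm_eq_abs]
      have h1 : |p.1 - p.2| ≤ t := by
        rw [abs_of_nonneg (by linarith [hlt.le])]
        have := hp1.2; have := hp2.1; linarith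
      have : |p.1 - p.2|^k ≤ t^k := pow_le_pow_left₀ (abs_nonneg _) h1 k
      exact mul_le_mul_of_nonneg_right this (abs_nonneg _)
    · have e : Function.uncurry h p = 0 := by
        simp [Function.uncurry, hh, not_lt.mpr hle]
      rw [e, norm_zero]
      positivity
  have swap := integral_integral_swap hint
  -- LHS rewriting: inner integral in s
  have hLHSin : ∀ u ∈ Set.Ioc (0:ℝ) t, (∫ s, h u s ∂μt) = ∫ s in (0:ℝ)..u, (u - s)^k * g s := by
    intro u hu
    have hne : ∀ᵐ s ∂μt, s ≠ u := by
      refine ae_restrict_of_ae ?_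
      rw [ae_iff]
      simp only [ne_eq, not_not, Set.setOf_eq_eq_singleton]
      exact measure_singleton u
    have hmem : ∀ᵐ s ∂μt, s ∈ Set.Ioc (0:ℝ) t := ae_restrict_mem measurableSet_Ioc
    have he : (fun s => h u s) =ᵐ[μt]
        Set.indicator (Set.Ioc 0 u) (fun s => (u - s)^k * g s) := by
      filter_upwards [hne, hmem] with s hsne hsmem
      rcases lt_or_ge s u with hlt | hle
      · have : s ∈ Set.Ioc (0:ℝ) u := ⟨hsmem.1, hlt.le⟩
        simp [hh, hlt, Set.indicator_of_mem this]
      · have hne' : ¬ s < u := not_lt.mpr hle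
        have : s ∉ Set.Ioc (0:ℝ) u := by
          intro hmem'
          exact hsne (le_antisymm hmem'.2 hle)
        simp [hh, hne', Set.indicator_of_notMem this]
    rw [hμt, integral_congr_ae he, setIntegral_indicator measurableSet_Ioc]
    have : Set.Ioc (0:ℝ) t ∩ Set.Ioc 0 u = Set.Ioc 0 u := by
      rw [Set.inter_eq_right]
      exact Set.Ioc_subset_Ioc_right hu.2
    rw [this, intervalIntegral.integral_of_le hu.1.le]
  -- RHS rewriting: inner integral in u
  have hRHSin : ∀ s ∈ Set.Ioc (0:ℝ) t, (∫ u, h u s ∂μt) =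
      (1/(k+1) : ℝ) * ((t - s)^(k+1) * g s) := by
    intro s hs
    have he : (fun u => h u s) = Set.indicator (Set.Ioi s) (fun u => (u - s)^k * g s) := by
      funext u
      rcases lt_or_ge s u with hlt | hle
      · simp [hh, hlt, Set.indicator_of_mem (Set.mem_Ioi.mpr hlt)]
      · simp [hh, not_lt.mpr hle, Set.indicator_apply, Set.mem_Ioi]
    rw [hμt, he, setIntegral_indicator measurableSet_Ioi]
    have hinter : Set.Ioc (0:ℝ) t ∩ Set.Ioi s = Set.Ioc s t := by
      ext x
      simp only [Set.mem_inter_iff, Set.mem_Ioc, Set.mem_Ioi]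
      constructor
      · rintro ⟨⟨_, hx2⟩, hx3⟩; exact ⟨hx3, hx2⟩
      · rintro ⟨hx1, hx2⟩; exact ⟨⟨lt_trans hs.1 hx1, hx2⟩, hx1⟩
    rw [hinter, ← intervalIntegral.integral_of_le hs.2]
    rw [intervalIntegral.integral_mul_const]
    have : (∫ u in s..t, (u - s)^k) = (t - s)^(k+1) / (k+1) := by
      rw [intervalIntegral.integral_comp_sub_right (fun x => x^k) s]
      rw [sub_self, integral_pow]
      simp
    rw [this]
    ring
  -- put together
  rw [intervalIntegral.integral_of_le ht0]
  calc ∫ u in Set.Ioc (0:ℝ) t, (∫ s in (0:ℝ)..u, (u - s)^k * g s)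
      = ∫ u, (∫ s, h u s ∂μt) ∂μt := by
        rw [hμt]
        refine setIntegral_congr_fun measurableSet_Ioc ?_
        intro u hu
        exact (hLHSin u hu).symm
    _ = ∫ s, (∫ u, h u s ∂μt) ∂μt := swap
    _ = ∫ s, (1/(k+1) : ℝ) * ((t - s)^(k+1) * g s) ∂μt := by
        rw [hμt]
        refine setIntegral_congr_fun measurableSet_Ioc ?_
        intro s hs
        exact hRHSin s hs
    _ = (1/(k+1) : ℝ) * ∫ s in (0:ℝ)..t, (t - s)^(k+1) * g s := by
        rw [integral_const_mul, intervalIntegral.integral_of_le ht0, hμt]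

lemma aux_cauchy {g : ℝ → ℝ} {τ : ℝ} (hg : IntegrableOn g (Set.Ioc 0 τ)) (k : ℕ) :
    ∀ t ∈ Set.Icc (0:ℝ) τ, iterInt g (k+1) t =
      (1/(k.factorial) : ℝ) * ∫ s in (0:ℝ)..t, (t - s)^k * g s := by
  induction k with
  | zero =>
    intro t ht
    simp [iterInt]
  | succ k ih =>
    intro t ht
    have step1 : iterInt g (k+2) t =
        ∫ u in (0:ℝ)..t, (1/(k.factorial) : ℝ) * ∫ s in (0:ℝ)..u, (u - s)^k * g s := by
      show (∫ u in (0:ℝ)..t, iterInt g (k+1) u) = _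
      refine intervalIntegral.integral_congr ?_
      intro u hu
      rw [Set.uIcc_of_le ht.1] at hu
      exact ih u ⟨hu.1, le_trans hu.2 ht.2⟩
    rw [step1, intervalIntegral.integral_const_mul, aux_fubini hg k ht.1 ht.2]
    rw [← mul_assoc]
    congr 1
    rw [Nat.factorial_succ]
    have h1 : ((k:ℝ) + 1) ≠ 0 := by positivity
    have h2 : ((k.factorial : ℝ)) ≠ 0 := by positivity
    push_cast
    field_simp

lemma aux_vanish {g : ℝ → ℝ} {τ : ℝ} (hτ : 0 < τ) (hg : IntegrableOn g (Set.Ioc 0 τ))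
    {L : ℕ} (hmom : ∀ i < L, ∫ t in (0 : ℝ)..τ, t ^ i * g t = 0)
    {m : ℕ} (hm : m < L) :
    ∫ s in (0:ℝ)..τ, (τ - s)^m * g s = 0 := by
  have hint : ∀ j : ℕ, IntervalIntegrable (fun s => s ^ j * g s) volume 0 τ := by
    intro j
    rw [intervalIntegrable_iff_integrableOn_Ioc_of_le hτ.le]
    refine aux_wint hg (subset_refl _) (fun s => s ^ j) (continuous_pow j) (τ^j) ?_
    intro s hs
    rw [abs_pow]
    refine pow_le_pow_left₀ (abs_nonneg _) ?_ j
    rw [abs_of_nonneg hs.1.le]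
    exact hs.2
  have expand : ∀ s : ℝ, (τ - s)^m * g s =
      ∑ j ∈ Finset.range (m+1), ((-1:ℝ)^(j+m) * τ^j * (m.choose j)) * (s^(m-j) * g s) := by
    intro s
    rw [sub_pow]
    rw [Finset.sum_mul]
    congr 1
    funext j
    ring
  calc ∫ s in (0:ℝ)..τ, (τ - s)^m * g s
      = ∫ s in (0:ℝ)..τ, ∑ j ∈ Finset.range (m+1),
          ((-1:ℝ)^(j+m) * τ^j * (m.choose j)) * (s^(m-j) * g s) := by
        refine intervalIntegral.integral_congr ?_
        intro s _
        exact expand s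
    _ = ∑ j ∈ Finset.range (m+1), ∫ s in (0:ℝ)..τ,
          ((-1:ℝ)^(j+m) * τ^j * (m.choose j)) * (s^(m-j) * g s) := by
        refine intervalIntegral.integral_finset_sum ?_
        intro j _
        exact (hint (m-j)).const_mul _
    _ = 0 := by
        refine Finset.sum_eq_zero ?_
        intro j _
        rw [intervalIntegral.integral_const_mul, hmom (m-j) (lt_of_le_of_lt (Nat.sub_le m j) hm)]
        ring

/-- **Inclusion `(P_{L-1})^⊥ ⊆ {φ^{(L)} : φ ∈ H^L_0}` from Lemma 3.1.** If `g ∈ L²(0,τ)`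
is orthogonal to all monomials `t^i`, `i < L`, then the `L`-fold iterated integral
`ψ = J^L g` (Cauchy's formula) lies in `H^L_0[0,τ]` and `ψ^{(L)} = g` a.e.; here the
witnessing derivative chain `D` satisfies `D 0 = ψ` on `[0,τ]` and `D L = g`. -/
theorem stmt_15 (τ : ℝ) (hτ : 0 < τ) (L : ℕ) (hL : 1 ≤ L)
    (g : ℝ → ℝ) (hg : MemL2 τ g)
    (hmom : ∀ i < L, ∫ t in (0 : ℝ)..τ, t ^ i * g t = 0) :
    ∃ D : ℕ → ℝ → ℝ, IsH0 τ L D ∧ D L = g ∧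
      ∀ t ∈ Set.Icc (0 : ℝ) τ,
        D 0 t = (1 / (L - 1).factorial : ℝ) * ∫ s in (0 : ℝ)..t, (t - s) ^ (L - 1) * g s := by
  haveI : IsFiniteMeasure (volume.restrict (Set.Ioc (0:ℝ) τ)) := by
    constructor
    rw [Measure.restrict_apply_univ]
    exact measure_Ioc_lt_top
  have hg' : IntegrableOn g (Set.Ioc 0 τ) := MemLp.integrable one_le_two hg
  refine ⟨fun ℓ => iterInt g (L - ℓ), ⟨?_, ?_, ?_⟩, ?_, ?_⟩
  · -- DerivChain
    intro ℓ hℓ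
    obtain ⟨m, hm1, hm2⟩ : ∃ m, L - (ℓ+1) = m ∧ L - ℓ = m + 1 := ⟨L - (ℓ+1), rfl, by omega⟩
    constructor
    · show IntervalIntegrable (iterInt g (L - (ℓ+1))) volume 0 τ
      rw [hm1]
      cases m with
      | zero =>
        show IntervalIntegrable g volume 0 τ
        rw [intervalIntegrable_iff_integrableOn_Ioc_of_le hτ.le]
        exact hg'
      | succ m =>
        rw [intervalIntegrable_iff_integrableOn_Ioc_of_le hτ.le]
        exact (aux_cont hτ hg' m).2
    · intro t ht
      show iterInt g (L - ℓ) t = iterInt g (L - ℓ) 0 + ∫ s in (0:ℝ)..t, iterInt g (L - (ℓ+1)) s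
      rw [hm1, hm2]
      show (∫ s in (0:ℝ)..t, iterInt g m s) = (∫ s in (0:ℝ)..(0:ℝ), iterInt g m s) + _
      rw [intervalIntegral.integral_same, zero_add]
  · -- MemL2
    show MemL2 τ (iterInt g (L - L))
    rw [Nat.sub_self]
    exact hg
  · -- vanish at endpoints
    intro ℓ hℓ
    obtain ⟨m, hm2⟩ : ∃ m, L - ℓ = m + 1 := ⟨L - (ℓ+1), by omega⟩
    show iterInt g (L - ℓ) 0 = 0 ∧ iterInt g (L - ℓ) τ = 0
    rw [hm2]
    constructor
    · show (∫ s in (0:ℝ)..(0:ℝ), iterInt g m s) = 0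
      exact intervalIntegral.integral_same
    · rw [aux_cauchy hg' m τ ⟨hτ.le, le_refl τ⟩, aux_vanish hτ hg' hmom (by omega : m < L)]
      ring
  · -- D L = g
    show iterInt g (L - L) = g
    rw [Nat.sub_self]
    rfl
  · -- Cauchy formula for D 0
    intro t ht
    obtain ⟨m, hm'⟩ : ∃ m, L - 1 = m := ⟨L - 1, rfl⟩
    have hm : L = m + 1 := by omega
    show iterInt g (L - 0) t = (1 / (L - 1).factorial : ℝ) * ∫ s in (0:ℝ)..t, (t - s) ^ (L - 1) * g s
    rw [Nat.sub_zero, hm', hm, aux_cauchy hg' m t ht]
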